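/- arXiv:2504.02448 — 4 statements merged into one kernel-verified Lean document; each statement's English description precedes it below -/
import Mathlib

section
/- Let T be a rooted tree with root r, where each vertex v is labeled l(v) = dist(v, r) mod 2 (so l(r) = 0), and each set of children carries a total order. Then the Tree-to-Path algorithm (which, for each non-root vertex, adds one directed edge determined by its label, its ordered siblings and its children as in the four cases per label) outputs a directed Hamiltonian path P on the vertices of T with Beg(P) = r and End(P) equal to the minimum child of r. -/
variable {V : Type*}

/-- Children of `v` under parent map `p` with root `r`. -/
def t2pChild [Fintype V] [LinearOrder V] (r : V) (p : V → V) (v : V) : Finset V :=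
  Finset.univ.filter (fun u => u ≠ r ∧ p u = v)

/-- Siblings of `v` greater than `v`. -/
def t2pRSib [Fintype V] [LinearOrder V] (r : V) (p : V → V) (v : V) : Finset V :=
  (t2pChild r p (p v)).filter (fun w => v < w)

/-- Siblings of `v` smaller than `v`. -/
def t2pLSib [Fintype V] [LinearOrder V] (r : V) (p : V → V) (v : V) : Finset V :=
  (t2pChild r p (p v)).filter (fun w => w < v)

/-- The directed edge added by the Tree-to-Path algorithm for a non-root vertex `v`,
where `l` is the label function (only its parity matters).  For `l v` odd the edge goes
from `p v` (resp. the minimum greater sibling) to `v` (resp. the maximum child of `v`);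
for `l v` even it goes from `v` (resp. the minimum child of `v`) to `p v`
(resp. the maximum smaller sibling). -/
def t2pEdge [Fintype V] [LinearOrder V] (r : V) (p : V → V) (l : V → ℕ) (v : V) : V × V :=
  if l v % 2 = 1 then
    (if h : (t2pRSib r p v).Nonempty then (t2pRSib r p v).min' h else p v,
     if h : (t2pChild r p v).Nonempty then (t2pChild r p v).max' h else v)
  else
    (if h : (t2pChild r p v).Nonempty then (t2pChild r p v).min' h else v,
     if h : (t2pLSib r p v).Nonempty then (t2pLSib r p v).max' h else p v)


set_option linter.unusedSectionVars false
set_option maxHeartbeats 1000000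

section T2PAux
variable {V : Type*} [Fintype V] [LinearOrder V]

lemma max'_eq {s : Finset V} (h : s.Nonempty) {c : V} (hc : c ∈ s)
    (hb : ∀ w ∈ s, w ≤ c) : s.max' h = c :=
  le_antisymm (Finset.max'_le _ _ _ hb) (Finset.le_max' _ _ hc)

lemma min'_eq {s : Finset V} (h : s.Nonempty) {c : V} (hc : c ∈ s)
    (hb : ∀ w ∈ s, c ≤ w) : s.min' h = c :=
  le_antisymm (Finset.min'_le _ _ hc) (Finset.le_min' _ _ _ hb)

def kids (s : Finset V) : List V := (s.sort (· ≤ ·)).reverse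

lemma mem_kids {s : Finset V} {x : V} : x ∈ kids s ↔ x ∈ s := by simp [kids]

lemma kids_pairwise (s : Finset V) : (kids s).Pairwise (· > ·) := by
  rw [kids, List.pairwise_reverse]; exact (Finset.sortedLT_sort s).pairwise

lemma kids_toFinset (s : Finset V) : (kids s).toFinset = s := by simp [kids]

lemma kids_ne_nil {s : Finset V} (h : s.Nonempty) : kids s ≠ [] := by
  intro e
  obtain ⟨x, hx⟩ := h
  have := (mem_kids (s := s) (x := x)).mpr hx
  rw [e] at this; simp at this

lemma kids_head? {s : Finset V} (h : s.Nonempty) :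
    (kids s).head? = some (s.max' h) := by
  rcases he : kids s with _ | ⟨a, t⟩
  · exact absurd he (kids_ne_nil h)
  · have ha : a ∈ s := by rw [← mem_kids (s := s), he]; simp
    have hp := kids_pairwise s
    rw [he] at hp
    have hmax : ∀ w ∈ s, w ≤ a := by
      intro w hw
      rw [← mem_kids (s := s), he] at hw
      rcases List.mem_cons.mp hw with rfl | hw
      · exact le_rfl
      · exact le_of_lt (List.rel_of_pairwise_cons hp hw)
    simp [max'_eq h ha hmax]

lemma kids_getLast? {s : Finset V} (h : s.Nonempty) :
    (kids s).getLast? = some (s.min' h) := by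
  rw [kids, List.getLast?_reverse]
  rcases he : s.sort (· ≤ ·) with _ | ⟨a, t⟩
  · exfalso
    obtain ⟨x, hx⟩ := h
    have : x ∈ s.sort (· ≤ ·) := (Finset.mem_sort _).mpr hx
    rw [he] at this; simp at this
  · have ha : a ∈ s := by rw [← Finset.mem_sort (· ≤ ·), he]; simp
    have hp : (a :: t).Pairwise (· ≤ ·) := he ▸ Finset.pairwise_sort s (· ≤ ·)
    have hmin : ∀ w ∈ s, a ≤ w := by
      intro w hw
      rw [← Finset.mem_sort (· ≤ ·), he] at hw
      rcases List.mem_cons.mp hw with rfl | hw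
      · exact le_rfl
      · exact List.rel_of_pairwise_cons hp hw
    simp [min'_eq h ha hmin]

namespace T2P

variable (r : V) (p : V → V) (d : V → ℕ)

def Sub (v : V) : Finset V :=
  Finset.univ.filter (fun u => d v ≤ d u ∧ p^[d u - d v] u = v)

lemma mem_child {u v : V} : u ∈ t2pChild r p v ↔ u ≠ r ∧ p u = v := by simp [t2pChild]

lemma mem_Sub {u v : V} : u ∈ Sub p d v ↔ d v ≤ d u ∧ p^[d u - d v] u = v := by simp [Sub]

def Ed : Finset (V × V) := (Finset.univ.filter (fun v => v ≠ r)).image (t2pEdge r p d)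

def inE (a b : V) : Prop := (a, b) ∈ Ed r p d

lemma inE_of {a b : V} (v : V) (hv : v ≠ r) (he : t2pEdge r p d v = (a, b)) :
    inE r p d a b := Finset.mem_image.mpr ⟨v, by simp [hv], he⟩

def OddStmt (v : V) : Prop :=
  ∃ L : List V, L.Nodup ∧ L.toFinset = Sub p d v ∧ L.Chain' (inE r p d) ∧
    L.head? = some (if h : (t2pChild r p v).Nonempty then (t2pChild r p v).max' h else v) ∧
    L.getLast? = some v

def EvenStmt (v : V) : Prop :=
  ∃ L : List V, L.Nodup ∧ L.toFinset = Sub p d v ∧ L.Chain' (inE r p d) ∧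
    L.head? = some v ∧
    L.getLast? = some (if h : (t2pChild r p v).Nonempty then (t2pChild r p v).min' h else v)

variable (hdr : d r = 0) (hd : ∀ v, v ≠ r → d v = d (p v) + 1)
include hdr hd

lemma ne_root_of_dpos {v : V} (h : d v ≠ 0) : v ≠ r := fun e => h (e ▸ hdr)

lemma d_iter {u : V} : ∀ k, k ≤ d u → d (p^[k] u) = d u - k := by
  intro k
  induction k with
  | zero => simp
  | succ m ih =>
    intro hk
    have h1 : d (p^[m] u) = d u - m := ih (by omega)
    have hne : p^[m] u ≠ r := ne_root_of_dpos r p d hdr hd (by omega)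
    have := hd _ hne
    rw [Function.iterate_succ_apply']
    omega

lemma self_mem_Sub (v : V) : v ∈ Sub p d v := by simp [mem_Sub]

lemma child_d {c v : V} (hc : c ∈ t2pChild r p v) : d c = d v + 1 := by
  rw [mem_child] at hc
  rw [hd c hc.1, hc.2]

lemma Sub_trans {u c v : V} (hc : c ∈ t2pChild r p v) (hu : u ∈ Sub p d c) :
    u ∈ Sub p d v := by
  rw [mem_Sub] at hu ⊢
  have hdc := child_d r p d hdr hd hc
  rw [mem_child] at hc
  have h1 : d u - d v = (d u - d c) + 1 := by omega
  rw [h1, Function.iterate_succ_apply', hu.2, hc.2]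
  exact ⟨by omega, rfl⟩

lemma mem_Sub_cases {u v : V} (hu : u ∈ Sub p d v) (hne : u ≠ v) :
    ∃ c ∈ t2pChild r p v, u ∈ Sub p d c := by
  rw [mem_Sub] at hu
  have hlt : d v < d u := by
    rcases Nat.lt_or_ge (d v) (d u) with h | h
    · exact h
    · exfalso; apply hne
      have : d u - d v = 0 := by omega
      rw [this] at hu; simpa using hu.2
  set c := p^[d u - d v - 1] u with hc
  have hdc : d c = d v + 1 := by
    rw [hc, d_iter r p d hdr hd _ (by omega)]; omega
  have hcr : c ≠ r := ne_root_of_dpos r p d hdr hd (by omega)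
  have hpc : p c = v := by
    have : d u - d v = (d u - d v - 1) + 1 := by omega
    rw [this, Function.iterate_succ_apply'] at hu
    exact hu.2
  refine ⟨c, (mem_child r p).mpr ⟨hcr, hpc⟩, ?_⟩
  rw [mem_Sub, hdc]
  exact ⟨by omega, hc ▸ rfl⟩

lemma not_mem_Sub_child {c v : V} (hc : c ∈ t2pChild r p v) : v ∉ Sub p d c := by
  rw [mem_Sub]
  have := child_d r p d hdr hd hc
  omega

lemma Sub_disj {c c' v : V} (hc : c ∈ t2pChild r p v) (hc' : c' ∈ t2pChild r p v)
    (hne : c ≠ c') : Disjoint (Sub p d c) (Sub p d c') := by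
  rw [Finset.disjoint_left]
  intro u h1 h2
  rw [mem_Sub] at h1 h2
  apply hne
  have e1 := child_d r p d hdr hd hc
  have e2 := child_d r p d hdr hd hc'
  rw [← h1.2, ← h2.2, e1, e2]

lemma Sub_decomp (v : V) :
    Sub p d v = insert v ((t2pChild r p v).biUnion (Sub p d)) := by
  ext u
  simp only [Finset.mem_insert, Finset.mem_biUnion]
  constructor
  · intro hu
    by_cases h : u = v
    · exact Or.inl h
    · exact Or.inr (mem_Sub_cases r p d hdr hd hu h)
  · rintro (rfl | ⟨c, hc, hu⟩)
    · exact self_mem_Sub r p d hdr hd u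
    · exact Sub_trans r p d hdr hd hc hu

lemma card_Sub_lt {c v : V} (hc : c ∈ t2pChild r p v) :
    (Sub p d c).card < (Sub p d v).card := by
  apply Finset.card_lt_card
  constructor
  · intro u hu; exact Sub_trans r p d hdr hd hc hu
  · intro hsub
    exact not_mem_Sub_child r p d hdr hd hc (hsub (self_mem_Sub r p d hdr hd v))

lemma Sub_root : Sub p d r = Finset.univ := by
  ext u
  simp only [Finset.mem_univ, iff_true, mem_Sub, hdr]
  refine ⟨Nat.zero_le _, ?_⟩
  have : ∀ n u, d u ≤ n → p^[d u] u = r := by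
    intro n
    induction n with
    | zero =>
      intro u hu
      have : d u = 0 := by omega
      rw [this]
      by_contra h
      have := hd u (by simpa using h)
      omega
    | succ m ih =>
      intro u hu
      by_cases h : u = r
      · subst h; rw [hdr]; simp
      · have hdu := hd u h
        have h0 : d u = d (p u) + 1 := hdu
        rw [h0, Function.iterate_succ_apply]
        exact ih (p u) (by omega)
  simpa using this (d u) u le_rfl

lemma root_has_child (hcard : 2 ≤ Fintype.card V) : (t2pChild r p r).Nonempty := by
  obtain ⟨u, hu⟩ := Fintype.exists_ne_of_one_lt_card (by omega) r
  have humem : u ∈ Sub p d r := by rw [Sub_root r p d hdr hd]; simp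
  obtain ⟨c, hc, -⟩ := mem_Sub_cases r p d hdr hd humem hu
  exact ⟨c, hc⟩

lemma innerOdd (v : V) (hv : d v % 2 = 1)
    (IH : ∀ c ∈ t2pChild r p v, EvenStmt r p d c) :
    ∀ cs : List V, cs ≠ [] → cs.Pairwise (· > ·) →
      (∀ c ∈ cs, c ∈ t2pChild r p v) →
      (∀ w ∈ t2pChild r p v, ∀ c0 ∈ cs.head?, w ≤ c0 → w ∈ cs) →
      ∃ M : List V, M.Nodup ∧ M.toFinset = cs.toFinset.biUnion (Sub p d) ∧
        M.Chain' (inE r p d) ∧ M.head? = cs.head? ∧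
        ∃ e, M.getLast? = some e ∧ inE r p d e v := by
  intro cs
  induction cs with
  | nil => intro h; exact absurd rfl h
  | cons c cs' ih =>
    intro _ hpw hmem hcl
    have hc : c ∈ t2pChild r p v := hmem c (by simp)
    obtain ⟨L, hLnd, hLfin, hLch, hLhd, hLlast⟩ := IH c hc
    have hcr : c ≠ r := ((mem_child r p).mp hc).1
    have hpc : p c = v := ((mem_child r p).mp hc).2
    have hdc : d c % 2 ≠ 1 := by have := child_d r p d hdr hd hc; omega
    have hLne : L ≠ [] := by intro e; rw [e] at hLhd; simp at hLhd
    rcases cs' with _ | ⟨c', rest⟩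
    · -- base case : single child in the list
      refine ⟨L, hLnd, ?_, hLch, by simpa using hLhd, _, hLlast, ?_⟩
      · rw [hLfin]; simp
      · have hLS : ¬ (t2pLSib r p c).Nonempty := by
          rintro ⟨w, hw⟩
          rw [t2pLSib, Finset.mem_filter, hpc] at hw
          have h2 := hcl w hw.1 c (by simp) (le_of_lt hw.2)
          simp only [List.mem_singleton] at h2
          subst h2
          exact lt_irrefl _ hw.2
        apply inE_of r p d c hcr
        rw [t2pEdge, if_neg hdc, dif_neg hLS, hpc]
    · -- step case
      have hgt : c > c' := List.rel_of_pairwise_cons hpw (by simp)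
      have hc' : c' ∈ t2pChild r p v := hmem c' (by simp)
      have hcl' : ∀ w ∈ t2pChild r p v, ∀ c0 ∈ (c' :: rest).head?, w ≤ c0 → w ∈ c' :: rest := by
        intro w hw c0 hc0 hle
        simp only [List.head?_cons, Option.mem_def, Option.some.injEq] at hc0
        subst hc0
        have hwc : w < c := lt_of_le_of_lt hle hgt
        have := hcl w hw c (by simp) (le_of_lt hwc)
        rcases List.mem_cons.mp this with rfl | h2
        · exact absurd hwc (lt_irrefl _)
        · exact h2
      obtain ⟨M', hMnd, hMfin, hMch, hMhd, e, hMlast, hMe⟩ :=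
        ih (by simp) (List.Pairwise.of_cons hpw) (fun x hx => hmem x (by simp [hx])) hcl'
      have hMne : M' ≠ [] := by
        intro hM; rw [hM] at hMhd; simp at hMhd
      -- connecting edge from end of L to c'
      have hLSne : (t2pLSib r p c).Nonempty := by
        refine ⟨c', ?_⟩
        rw [t2pLSib, Finset.mem_filter, hpc]
        exact ⟨hc', hgt⟩
      have hmax : (t2pLSib r p c).max' hLSne = c' := by
        apply max'_eq
        · rw [t2pLSib, Finset.mem_filter, hpc]; exact ⟨hc', hgt⟩
        · intro w hw
          rw [t2pLSib, Finset.mem_filter, hpc] at hw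
          have h2 := hcl w hw.1 c (by simp) (le_of_lt hw.2)
          rcases List.mem_cons.mp h2 with rfl | h3
          · exact absurd hw.2 (lt_irrefl _)
          · rcases List.mem_cons.mp h3 with rfl | h4
            · exact le_rfl
            · exact le_of_lt (List.rel_of_pairwise_cons (List.Pairwise.of_cons hpw) h4)
      have hedge : inE r p d
          (if h : (t2pChild r p c).Nonempty then (t2pChild r p c).min' h else c) c' := by
        apply inE_of r p d c hcr
        rw [t2pEdge, if_neg hdc, dif_pos hLSne, hmax]
      refine ⟨L ++ M', ?_, ?_, ?_, ?_, e, ?_, hMe⟩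
      · refine hLnd.append hMnd ?_
        intro a haL haM
        have h1 : a ∈ Sub p d c := by rw [← hLfin]; exact List.mem_toFinset.mpr haL
        have h2 : a ∈ (c' :: rest).toFinset.biUnion (Sub p d) := by
          rw [← hMfin]; exact List.mem_toFinset.mpr haM
        rw [Finset.mem_biUnion] at h2
        obtain ⟨x, hx, hax⟩ := h2
        rw [List.mem_toFinset] at hx
        have hxc : x ≠ c := by
          intro e; subst e
          exact absurd (List.rel_of_pairwise_cons hpw hx) (lt_irrefl _)
        exact Finset.disjoint_left.mp
          (Sub_disj r p d hdr hd hc (hmem x (by simp [hx])) (Ne.symm hxc)) h1 hax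
      · rw [List.toFinset_append, hLfin, hMfin]
        simp [Finset.biUnion_insert]
      · refine hLch.append hMch ?_
        intro x hx y hy
        rw [hLlast] at hx
        rw [hMhd] at hy
        simp only [List.head?_cons, Option.mem_def, Option.some.injEq] at hx hy
        subst hx; subst hy
        exact hedge
      · rw [List.head?_append_of_ne_nil _ hLne, hLhd]; simp
      · rw [List.getLast?_append_of_ne_nil L hMne, hMlast]

lemma innerEven (v : V) (hv : d v % 2 = 0)
    (IH : ∀ c ∈ t2pChild r p v, OddStmt r p d c) :
    ∀ cs : List V, cs ≠ [] → cs.Pairwise (· > ·) →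
      (∀ c ∈ cs, c ∈ t2pChild r p v) →
      (∀ w ∈ t2pChild r p v, ∀ c0 ∈ cs.head?, w ≤ c0 → w ∈ cs) →
      ∃ M : List V, M.Nodup ∧ M.toFinset = cs.toFinset.biUnion (Sub p d) ∧
        M.Chain' (inE r p d) ∧
        (∀ c0 ∈ cs.head?, M.head? =
          some (if h : (t2pChild r p c0).Nonempty then (t2pChild r p c0).max' h else c0)) ∧
        ∃ e, cs.getLast? = some e ∧ M.getLast? = some e := by
  intro cs
  induction cs with
  | nil => intro h; exact absurd rfl h
  | cons c cs' ih =>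
    intro _ hpw hmem hcl
    have hc : c ∈ t2pChild r p v := hmem c (by simp)
    obtain ⟨L, hLnd, hLfin, hLch, hLhd, hLlast⟩ := IH c hc
    have hcr : c ≠ r := ((mem_child r p).mp hc).1
    have hpc : p c = v := ((mem_child r p).mp hc).2
    have hLne : L ≠ [] := by intro e; rw [e] at hLhd; simp at hLhd
    rcases cs' with _ | ⟨c', rest⟩
    · refine ⟨L, hLnd, ?_, hLch, ?_, c, by simp, hLlast⟩
      · rw [hLfin]; simp
      · intro c0 hc0
        simp only [List.head?_cons, Option.mem_def, Option.some.injEq] at hc0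
        subst hc0
        exact hLhd
    · have hgt : c > c' := List.rel_of_pairwise_cons hpw (by simp)
      have hc' : c' ∈ t2pChild r p v := hmem c' (by simp)
      have hc'r : c' ≠ r := ((mem_child r p).mp hc').1
      have hpc' : p c' = v := ((mem_child r p).mp hc').2
      have hdc' : d c' % 2 = 1 := by have := child_d r p d hdr hd hc'; omega
      have hcl' : ∀ w ∈ t2pChild r p v, ∀ c0 ∈ (c' :: rest).head?, w ≤ c0 → w ∈ c' :: rest := by
        intro w hw c0 hc0 hle
        simp only [List.head?_cons, Option.mem_def, Option.some.injEq] at hc0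
        subst hc0
        have hwc : w < c := lt_of_le_of_lt hle hgt
        have := hcl w hw c (by simp) (le_of_lt hwc)
        rcases List.mem_cons.mp this with rfl | h2
        · exact absurd hwc (lt_irrefl _)
        · exact h2
      obtain ⟨M', hMnd, hMfin, hMch, hMhd, e, hcse, hMlast⟩ :=
        ih (by simp) (List.Pairwise.of_cons hpw) (fun x hx => hmem x (by simp [hx])) hcl'
      have hMne : M' ≠ [] := by
        intro hM; rw [hM] at hMlast; simp at hMlast
      have hMhd' : M'.head? =
          some (if h : (t2pChild r p c').Nonempty then (t2pChild r p c').max' h else c') :=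
        hMhd c' (by simp)
      -- connecting edge: generated by c'
      have hRSne : (t2pRSib r p c').Nonempty := by
        refine ⟨c, ?_⟩
        rw [t2pRSib, Finset.mem_filter, hpc']
        exact ⟨hc, hgt⟩
      have hmin : (t2pRSib r p c').min' hRSne = c := by
        apply min'_eq
        · rw [t2pRSib, Finset.mem_filter, hpc']; exact ⟨hc, hgt⟩
        · intro w hw
          rw [t2pRSib, Finset.mem_filter, hpc'] at hw
          by_cases hwle : w ≤ c
          · have h2 := hcl w hw.1 c (by simp) hwle
            rcases List.mem_cons.mp h2 with rfl | h3
            · exact le_rfl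
            · rcases List.mem_cons.mp h3 with rfl | h4
              · exact absurd hw.2 (lt_irrefl _)
              · exact absurd (lt_trans hw.2 (List.rel_of_pairwise_cons
                  (List.Pairwise.of_cons hpw) h4)) (lt_irrefl _)
          · exact le_of_not_ge hwle
      have hedge : inE r p d c
          (if h : (t2pChild r p c').Nonempty then (t2pChild r p c').max' h else c') := by
        apply inE_of r p d c' hc'r
        rw [t2pEdge, if_pos hdc', dif_pos hRSne, hmin]
      refine ⟨L ++ M', ?_, ?_, ?_, ?_, e, by simpa using hcse, ?_⟩
      · refine hLnd.append hMnd ?_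
        intro a haL haM
        have h1 : a ∈ Sub p d c := by rw [← hLfin]; exact List.mem_toFinset.mpr haL
        have h2 : a ∈ (c' :: rest).toFinset.biUnion (Sub p d) := by
          rw [← hMfin]; exact List.mem_toFinset.mpr haM
        rw [Finset.mem_biUnion] at h2
        obtain ⟨x, hx, hax⟩ := h2
        rw [List.mem_toFinset] at hx
        have hxc : x ≠ c := by
          intro e; subst e
          exact absurd (List.rel_of_pairwise_cons hpw hx) (lt_irrefl _)
        exact Finset.disjoint_left.mp
          (Sub_disj r p d hdr hd hc (hmem x (by simp [hx])) (Ne.symm hxc)) h1 hax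
      · rw [List.toFinset_append, hLfin, hMfin]
        simp [Finset.biUnion_insert]
      · refine hLch.append hMch ?_
        intro x hx y hy
        rw [hLlast] at hx
        rw [hMhd'] at hy
        simp only [Option.mem_def, Option.some.injEq] at hx hy
        subst hx; subst hy
        exact hedge
      · intro c0 hc0
        simp only [List.head?_cons, Option.mem_def, Option.some.injEq] at hc0
        subst hc0
        rw [List.head?_append_of_ne_nil _ hLne, hLhd]
      · rw [List.getLast?_append_of_ne_nil L hMne, hMlast]

lemma main : ∀ (n : ℕ) (v : V), (Sub p d v).card ≤ n →
    (d v % 2 = 1 → OddStmt r p d v) ∧ (d v % 2 = 0 → EvenStmt r p d v) := by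
  intro n
  induction n with
  | zero =>
    intro v hv
    exfalso
    have := Finset.card_pos.mpr ⟨v, self_mem_Sub r p d hdr hd v⟩
    omega
  | succ m ihn =>
    intro v hcard
    have hsub : ∀ c ∈ t2pChild r p v, (Sub p d c).card ≤ m := by
      intro c hc
      have := card_Sub_lt r p d hdr hd hc
      omega
    constructor
    · -- odd case
      intro hodd
      have IH : ∀ c ∈ t2pChild r p v, EvenStmt r p d c := fun c hc =>
        (ihn c (hsub c hc)).2 (by have := child_d r p d hdr hd hc; omega)
      by_cases hch : (t2pChild r p v).Nonempty
      · obtain ⟨M, hMnd, hMfin, hMch, hMhd, e, hMlast, hMe⟩ :=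
          innerOdd r p d hdr hd v hodd IH (kids (t2pChild r p v)) (kids_ne_nil hch)
            (kids_pairwise _) (fun c hc => mem_kids.mp hc)
            (fun w hw c0 _ _ => mem_kids.mpr hw)
        have hMne : M ≠ [] := by
          intro hM
          rw [hM, kids_head? hch] at hMhd
          simp at hMhd
        refine ⟨M ++ [v], ?_, ?_, ?_, ?_, ?_⟩
        · refine hMnd.append (by simp) ?_
          intro a haM hav
          simp only [List.mem_singleton] at hav
          rw [hav] at haM
          have h1 : v ∈ (kids (t2pChild r p v)).toFinset.biUnion (Sub p d) := by
            rw [← hMfin]; exact List.mem_toFinset.mpr haM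
          rw [Finset.mem_biUnion] at h1
          obtain ⟨x, hx, hax⟩ := h1
          rw [List.mem_toFinset, mem_kids] at hx
          exact not_mem_Sub_child r p d hdr hd hx hax
        · rw [List.toFinset_append, hMfin, kids_toFinset, Sub_decomp r p d hdr hd v]
          simp
        · refine hMch.append (by simp) ?_
          intro x hx y hy
          rw [hMlast] at hx
          simp only [Option.mem_def, Option.some.injEq, List.head?_cons] at hx hy
          subst hx; subst hy
          exact hMe
        · rw [List.head?_append_of_ne_nil _ hMne, hMhd, kids_head? hch, dif_pos hch]
        · rw [List.getLast?_concat]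
      · refine ⟨[v], by simp, ?_, List.isChain_singleton _, by simp [dif_neg hch], by simp⟩
        rw [Sub_decomp r p d hdr hd v, Finset.not_nonempty_iff_eq_empty.mp hch]
        simp
    · -- even case
      intro heven
      have IH : ∀ c ∈ t2pChild r p v, OddStmt r p d c := fun c hc =>
        (ihn c (hsub c hc)).1 (by have := child_d r p d hdr hd hc; omega)
      by_cases hch : (t2pChild r p v).Nonempty
      · obtain ⟨M, hMnd, hMfin, hMch, hMhd, e, hcse, hMlast⟩ :=
          innerEven r p d hdr hd v heven IH (kids (t2pChild r p v)) (kids_ne_nil hch)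
            (kids_pairwise _) (fun c hc => mem_kids.mp hc)
            (fun w hw c0 _ _ => mem_kids.mpr hw)
        set c0 := (t2pChild r p v).max' hch with hc0
        have hc0mem : c0 ∈ t2pChild r p v := Finset.max'_mem _ _
        have hc0r : c0 ≠ r := ((mem_child r p).mp hc0mem).1
        have hpc0 : p c0 = v := ((mem_child r p).mp hc0mem).2
        have hdc0 : d c0 % 2 = 1 := by have := child_d r p d hdr hd hc0mem; omega
        have hMhd' : M.head? =
            some (if h : (t2pChild r p c0).Nonempty then (t2pChild r p c0).max' h else c0) :=
          hMhd c0 (by rw [kids_head? hch]; rfl)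
        have hMne : M ≠ [] := by
          intro hM; rw [hM] at hMhd'; simp at hMhd'
        have hRS : ¬ (t2pRSib r p c0).Nonempty := by
          rintro ⟨w, hw⟩
          rw [t2pRSib, Finset.mem_filter, hpc0] at hw
          exact absurd (Finset.le_max' _ _ hw.1) (not_le_of_gt hw.2)
        have hedge : inE r p d v
            (if h : (t2pChild r p c0).Nonempty then (t2pChild r p c0).max' h else c0) := by
          apply inE_of r p d c0 hc0r
          rw [t2pEdge, if_pos hdc0, dif_neg hRS, hpc0]
        refine ⟨v :: M, ?_, ?_, ?_, by simp, ?_⟩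
        · refine List.Nodup.cons ?_ hMnd
          intro hvM
          have h1 : v ∈ (kids (t2pChild r p v)).toFinset.biUnion (Sub p d) := by
            rw [← hMfin]; exact List.mem_toFinset.mpr hvM
          rw [Finset.mem_biUnion] at h1
          obtain ⟨x, hx, hax⟩ := h1
          rw [List.mem_toFinset, mem_kids] at hx
          exact not_mem_Sub_child r p d hdr hd hx hax
        · rw [List.toFinset_cons, hMfin, kids_toFinset, Sub_decomp r p d hdr hd v]
        · show List.IsChain _ (v :: M); rw [List.isChain_cons]
          refine ⟨?_, hMch⟩
          intro y hy
          rw [hMhd'] at hy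
          simp only [Option.mem_def, Option.some.injEq] at hy
          subst hy
          exact hedge
        · rw [← List.singleton_append, List.getLast?_append_of_ne_nil _ hMne, hMlast]
          rw [kids_getLast? hch] at hcse
          simp only [Option.some.injEq] at hcse
          rw [dif_pos hch, hcse]
      · refine ⟨[v], by simp, ?_, List.isChain_singleton _, by simp, by simp [dif_neg hch]⟩
        rw [Sub_decomp r p d hdr hd v, Finset.not_nonempty_iff_eq_empty.mp hch]
        simp

end T2P

end T2PAux

/-- **Tree-to-Path, root label 0.** For a finite rooted tree (given by a parent map `p`,
root `r` and consistent distances `d`, so labels are `d v % 2` and `l r = 0`), the edges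
added by the Tree-to-Path algorithm form a directed Hamiltonian path beginning at `r`
and ending at the minimum child of `r`. -/
theorem tree_to_path_root_label_zero [Fintype V] [LinearOrder V]
    (r : V) (p : V → V) (d : V → ℕ)
    (hcard : 2 ≤ Fintype.card V)
    (hdr : d r = 0)
    (hd : ∀ v, v ≠ r → d v = d (p v) + 1) :
    ∃ f : Fin (Fintype.card V) ≃ V,
      f ⟨0, by omega⟩ = r ∧
      IsLeast (↑(t2pChild r p r) : Set V) (f ⟨Fintype.card V - 1, by omega⟩) ∧
      ∀ a b : V,
        ((a, b) ∈ (Finset.univ.filter (fun v => v ≠ r)).image (t2pEdge r p d)) ↔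
          ∃ i : ℕ, ∃ h : i + 1 < Fintype.card V,
            a = f ⟨i, by omega⟩ ∧ b = f ⟨i + 1, h⟩ := by
  classical
  obtain ⟨L, hLnd, hLfin, hLch, hLhd, hLlast⟩ :=
    (T2P.main r p d hdr hd (T2P.Sub p d r).card r le_rfl).2 (by simp [hdr])
  have hLfin' : L.toFinset = Finset.univ := by
    rw [hLfin, T2P.Sub_root r p d hdr hd]
  have hlen : L.length = Fintype.card V := by
    rw [← List.toFinset_card_of_nodup hLnd, hLfin']
    exact Finset.card_univ
  have hch : (t2pChild r p r).Nonempty := T2P.root_has_child r p d hdr hd hcard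
  have hLne : L ≠ [] := by intro e; rw [e] at hLhd; simp at hLhd
  have hginj : Function.Injective
      (fun i : Fin (Fintype.card V) => L.get (Fin.cast hlen.symm i)) := by
    intro i j hij
    have h1 := List.nodup_iff_injective_get.mp hLnd hij
    have h2 : (Fin.cast hlen.symm i).val = (Fin.cast hlen.symm j).val := congrArg Fin.val h1
    exact Fin.ext h2
  have hbij : Function.Bijective
      (fun i : Fin (Fintype.card V) => L.get (Fin.cast hlen.symm i)) :=
    (Fintype.bijective_iff_injective_and_card _).mpr ⟨hginj, by simp⟩
  set f : Fin (Fintype.card V) ≃ V := Equiv.ofBijective _ hbij with hf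
  have hgval : ∀ (i : ℕ) (hi : i < Fintype.card V),
      f ⟨i, hi⟩ = L[i]'(by omega) := by
    intro i hi
    rw [hf]
    show L.get _ = _
    rw [List.get_eq_getElem]
    rfl
  refine ⟨f, ?_, ?_, ?_⟩
  · rw [hgval 0 (by omega)]
    have h1 := List.head?_eq_head (l := L) hLne
    rw [hLhd] at h1
    have h2 : r = L.head hLne := (Option.some.injEq _ _).mp h1
    rw [h2]
    exact List.getElem_zero _
  · rw [hgval _ (by omega)]
    rw [List.getLast?_eq_getElem?] at hLlast
    have hl1 : L.length - 1 < L.length := by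
      have h0 : 0 < L.length := by omega
      omega
    rw [List.getElem?_eq_getElem hl1] at hLlast
    have h3 : L[L.length - 1] =
        (if h : (t2pChild r p r).Nonempty then (t2pChild r p r).min' h else r) :=
      (Option.some.injEq _ _).mp hLlast
    rw [dif_pos hch] at h3
    have h4 : L[Fintype.card V - 1]'(by omega) = (t2pChild r p r).min' hch := by
      convert h3 using 2
      omega
    rw [h4]
    exact ⟨Finset.mem_coe.mpr (Finset.min'_mem _ _),
      fun w hw => Finset.min'_le _ _ (Finset.mem_coe.mp hw)⟩
  · intro a b
    have hEd : (Finset.univ.filter (fun v => v ≠ r)).image (t2pEdge r p d) = T2P.Ed r p d := rfl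
    have hzlen : (L.zip L.tail).length = L.length - 1 := by
      rw [List.length_zip, List.length_tail]
      omega
    have hzget : ∀ (k : ℕ) (hk : k < (L.zip L.tail).length),
        (L.zip L.tail)[k] = (L[k]'(by omega), L[k+1]'(by rw [hzlen] at hk; omega)) := by
      intro k hk
      rw [List.getElem_zip, List.getElem_tail]
    have hznd : (L.zip L.tail).Nodup := by
      rw [List.nodup_iff_injective_get]
      intro i j hij
      rw [List.get_eq_getElem, List.get_eq_getElem, hzget i.1 i.2, hzget j.1 j.2] at hij
      have h1 : L[i.1]'(by have := i.2; omega) = L[j.1]'(by have := j.2; omega) :=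
        congrArg Prod.fst hij
      exact Fin.ext ((List.Nodup.getElem_inj_iff hLnd).mp h1)
    have hsubset : (L.zip L.tail).toFinset ⊆ T2P.Ed r p d := by
      intro x hx
      rw [List.mem_toFinset, List.mem_iff_getElem] at hx
      obtain ⟨k, hk, hkx⟩ := hx
      rw [hzget k hk] at hkx
      have hchain := List.isChain_iff_getElem.mp hLch k (by rw [hzlen] at hk; omega)
      rw [← hkx]
      exact hchain
    have hcble : (T2P.Ed r p d).card ≤ ((L.zip L.tail).toFinset).card := by
      rw [List.toFinset_card_of_nodup hznd, hzlen]
      refine le_trans Finset.card_image_le ?_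
      rw [Finset.filter_ne', Finset.card_erase_of_mem (Finset.mem_univ r), Finset.card_univ]
      omega
    have hEzip : T2P.Ed r p d = (L.zip L.tail).toFinset :=
      (Finset.eq_of_subset_of_card_le hsubset hcble).symm
    rw [hEd, hEzip, List.mem_toFinset, List.mem_iff_getElem]
    constructor
    · rintro ⟨k, hk, hke⟩
      rw [hzget k hk] at hke
      have hk' : k + 1 < Fintype.card V := by rw [hzlen] at hk; omega
      refine ⟨k, hk', ?_, ?_⟩
      · rw [hgval k (by omega)]
        exact (congrArg Prod.fst hke).symm
      · rw [hgval (k+1) hk']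
        exact (congrArg Prod.snd hke).symm
    · rintro ⟨i, hi, ha, hb⟩
      refine ⟨i, by omega, ?_⟩
      rw [hzget i (by omega)]
      rw [hgval i (by omega)] at ha
      rw [hgval (i+1) hi] at hb
      rw [← ha, ← hb]
end

section
/- Let G' be a graph on n vertices in which every vertex has degree at most 2, exactly one vertex r has an assigned distance value 0, every other vertex v has a parent p(v) with assigned distance d(v) = d(p(v)) + 1 and edge {v, p(v)} in G', and every vertex of degree 2 has an identifier strictly between the identifiers of its two neighbors. If additionally the parent relation covers all vertices except r (each non-root vertex has a parent), then G' is exactly the sorted path on the n distinct identifiers: each vertex is adjacent precisely to its predecessor and successor in identifier order. -/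
section Aux
variable {V : Type*} [Fintype V] [LinearOrder V]
    (r : V) (p : V → V) (d : V → ℕ) (A : V → V → Prop)
    (hA : ∀ u v, A u v ↔
      ((v ≠ r ∧ p v = u ∧ d v = d u + 1) ∨ (u ≠ r ∧ p u = v ∧ d u = d v + 1)))
    (hdr : d r = 0)
    (hd : ∀ v, v ≠ r → d v = d (p v) + 1)
    (hdeg : ∀ u, Set.ncard {v | A u v} ≤ 2)
    (hsorted : ∀ u v w, A u v → A u w → v ≠ w →
      ((v < u ∧ u < w) ∨ (w < u ∧ u < v)))

set_option linter.unusedSectionVars false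
include hA hdr hd hdeg hsorted

/-- d v = 0 implies v = r -/
lemma csp_d_zero : ∀ v, d v = 0 → v = r := by
  intro v h
  by_contra hv
  have := hd v hv
  omega

/-- parent edge is an A-edge -/
lemma csp_edge : ∀ v, v ≠ r → A (p v) v := by
  intro v hv
  exact (hA _ _).mpr (Or.inl ⟨hv, rfl, hd v hv⟩)

/-- chains going up are monotone: if v < p v then p v ≤ r -/
lemma csp_C : ∀ n v, d v = n → v ≠ r → v < p v → p v ≤ r := by
  intro n
  induction n using Nat.strong_induction_on with
  | _ n ih =>
    intro v hdv hvr hlt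
    by_cases hpr : p v = r
    · exact le_of_eq hpr
    · have hApv : A (p v) v := csp_edge r p d A hA hdr hd hdeg hsorted v hvr
      have hApp : A (p v) (p (p v)) :=
        (hA _ _).mpr (Or.inr ⟨hpr, rfl, hd (p v) hpr⟩)
      have hdp : d v = d (p v) + 1 := hd v hvr
      have hdpp : d (p v) = d (p (p v)) + 1 := hd (p v) hpr
      have hne : v ≠ p (p v) := by
        intro h
        rw [← h] at hdpp
        omega
      rcases hsorted (p v) v (p (p v)) hApv hApp hne with ⟨h1, h2⟩ | ⟨h1, h2⟩
      · have := ih (d (p v)) (by omega) (p v) rfl hpr h2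
        exact le_trans (le_of_lt h2) this
      · exact absurd hlt (not_lt.mpr (le_of_lt h2))

/-- the dual sorted hypothesis -/
lemma csp_hs' : ∀ u v w : Vᵒᵈ, A u v → A u w → v ≠ w →
    ((v < u ∧ u < w) ∨ (w < u ∧ u < v)) := by
  intro u v w h1 h2 h3
  rcases hsorted u v w h1 h2 h3 with ⟨a, b⟩ | ⟨a, b⟩
  · exact Or.inr ⟨b, a⟩
  · exact Or.inl ⟨b, a⟩

/-- mirror of csp_C -/
lemma csp_C' : ∀ v, v ≠ r → p v < v → r ≤ p v := by
  intro v hv hlt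
  exact csp_C (V := Vᵒᵈ) r p d A hA hdr hd hdeg
    (csp_hs' r p d A hA hdr hd hdeg hsorted) (d v) v rfl hv hlt

/-- on the right side the parent is strictly below and at least r -/
lemma csp_rstep : ∀ v, r < v → p v < v ∧ r ≤ p v := by
  intro v hv
  have hvr : v ≠ r := ne_of_gt hv
  have hdv : d v = d (p v) + 1 := hd v hvr
  have hne : v ≠ p v := by
    intro h; rw [← h] at hdv; omega
  have hlt : p v < v := by
    rcases lt_or_gt_of_ne hne with h | h
    · have := csp_C r p d A hA hdr hd hdeg hsorted (d v) v rfl hvr h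
      exact absurd (lt_of_lt_of_le h this) (not_lt.mpr hv.le)
    · exact h
  exact ⟨hlt, csp_C' r p d A hA hdr hd hdeg hsorted v hvr hlt⟩

/-- each non-root vertex has at most one non-root child -/
lemma csp_child : ∀ x v w, x ≠ r → v ≠ r → w ≠ r → p v = x → p w = x → v = w := by
  intro x v w hx hv hw hpv hpw
  by_contra hne
  have hdpx : d x = d (p x) + 1 := hd x hx
  have hv1 : d v = d x + 1 := by rw [← hpv]; exact hd v hv
  have hw1 : d w = d x + 1 := by rw [← hpw]; exact hd w hw
  have h1 : v ≠ p x := by intro h; rw [h] at hv1; omega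
  have h2 : w ≠ p x := by intro h; rw [h] at hw1; omega
  have hsub : ({v, w, p x} : Set V) ⊆ {y | A x y} := by
    intro y hy
    rcases hy with hy | hy | hy
    · subst hy; exact (hA x y).mpr (Or.inl ⟨hv, hpv, hv1⟩)
    · subst hy; exact (hA x y).mpr (Or.inl ⟨hw, hpw, hw1⟩)
    · simp only [Set.mem_singleton_iff] at hy
      subst hy; exact (hA x (p x)).mpr (Or.inr ⟨hx, rfl, hdpx⟩)
  have h3 : ({v, w, p x} : Set V).ncard = 3 :=
    Set.ncard_eq_three.mpr ⟨v, w, p x, hne, h1, h2, rfl⟩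
  have h4 := Set.ncard_le_ncard hsub (Set.toFinite _)
  have h5 := hdeg x
  omega

/-- uniqueness of depth on the right side -/
lemma csp_U : ∀ n v w, d v = n → d w = n → r < v → r < w → v = w := by
  intro n
  induction n using Nat.strong_induction_on with
  | _ n ih =>
    intro v w hv hw hrv hrw
    by_contra hne
    have hvr : v ≠ r := ne_of_gt hrv
    have hwr : w ≠ r := ne_of_gt hrw
    have hdv : d v = d (p v) + 1 := hd v hvr
    have hdw : d w = d (p w) + 1 := hd w hwr
    by_cases hpv : p v = r
    · have hz : d (p w) = 0 := by rw [hpv, hdr] at hdv; omega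
      have hpw : p w = r := csp_d_zero r p d A hA hdr hd hdeg hsorted (p w) hz
      have h1 : A r v := by
        have := csp_edge r p d A hA hdr hd hdeg hsorted v hvr; rwa [hpv] at this
      have h2 : A r w := by
        have := csp_edge r p d A hA hdr hd hdeg hsorted w hwr; rwa [hpw] at this
      rcases hsorted r v w h1 h2 hne with ⟨a, _⟩ | ⟨a, _⟩
      · exact absurd a (not_lt.mpr hrv.le)
      · exact absurd a (not_lt.mpr hrw.le)
    · have hrpv : r < p v :=
        lt_of_le_of_ne (csp_rstep r p d A hA hdr hd hdeg hsorted v hrv).2 (Ne.symm hpv)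
      have hz : d (p v) ≠ 0 := by
        intro h
        exact hpv (csp_d_zero r p d A hA hdr hd hdeg hsorted (p v) h)
      have hpw : p w ≠ r := by
        intro h; rw [h, hdr] at hdw; omega
      have hrpw : r < p w :=
        lt_of_le_of_ne (csp_rstep r p d A hA hdr hd hdeg hsorted w hrw).2 (Ne.symm hpw)
      have heq : p v = p w :=
        ih (d (p v)) (by omega) (p v) (p w) rfl (by omega) hrpv hrpw
      exact hne (csp_child r p d A hA hdr hd hdeg hsorted (p v) v w hpv hvr hwr rfl heq.symm)

/-- depth respects order on the right side -/
lemma csp_O : ∀ n u v, d v = n → r < u → r < v → d u < d v → u < v := by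
  intro n
  induction n using Nat.strong_induction_on with
  | _ n ih =>
    intro u v hv hru hrv hlt
    have hvr : v ≠ r := ne_of_gt hrv
    obtain ⟨hpl, hpr⟩ := csp_rstep r p d A hA hdr hd hdeg hsorted v hrv
    have hdv : d v = d (p v) + 1 := hd v hvr
    rcases Nat.lt_or_ge (d u) (d (p v)) with h | h
    · have hpvr : p v ≠ r := by
        intro e; rw [e, hdr] at h; omega
      have hrpv : r < p v := lt_of_le_of_ne hpr (Ne.symm hpvr)
      exact lt_trans (ih (d (p v)) (by omega) u (p v) rfl hru hrpv h) hpl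
    · have heq : d u = d (p v) := by omega
      by_cases hpvr : p v = r
      · exfalso
        have hz : d u = 0 := by rw [hpvr, hdr] at heq; exact heq
        exact (ne_of_gt hru) (csp_d_zero r p d A hA hdr hd hdeg hsorted u hz)
      · have hrpv : r < p v := lt_of_le_of_ne hpr (Ne.symm hpvr)
        have := csp_U r p d A hA hdr hd hdeg hsorted (d u) u (p v) rfl heq.symm hru hrpv
        rw [this]; exact hpl

/-- order implies depth order on the right side -/
lemma csp_Olt : ∀ u v, r < u → r < v → u < v → d u < d v := by
  intro u v hru hrv hlt
  by_contra h
  rcases Nat.lt_or_ge (d v) (d u) with h1 | h1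
  · exact absurd (csp_O r p d A hA hdr hd hdeg hsorted (d u) v u rfl hrv hru h1)
      (not_lt.mpr hlt.le)
  · have : d u = d v := by omega
    exact (ne_of_lt hlt)
      (csp_U r p d A hA hdr hd hdeg hsorted (d u) u v rfl this.symm hru hrv)

/-- no vertex strictly between a vertex and its parent (right side) -/
lemma csp_gap : ∀ v w, v ≠ r → p v < v → p v < w → w < v → False := by
  intro v w hvr hp h1 h2
  have hrpv : r ≤ p v := csp_C' r p d A hA hdr hd hdeg hsorted v hvr hp
  have hrw : r < w := lt_of_le_of_lt hrpv h1
  have hrv : r < v := lt_trans hrw h2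
  have hdv : d v = d (p v) + 1 := hd v hvr
  have hdw : d w < d v := csp_Olt r p d A hA hdr hd hdeg hsorted w v hrw hrv h2
  by_cases hpvr : p v = r
  · have hz : d w = 0 := by rw [hpvr, hdr] at hdv; omega
    exact (ne_of_gt hrw) (csp_d_zero r p d A hA hdr hd hdeg hsorted w hz)
  · have hrpv' : r < p v := lt_of_le_of_ne hrpv (Ne.symm hpvr)
    have := csp_Olt r p d A hA hdr hd hdeg hsorted (p v) w hrpv' hrw h1
    omega

/-- adjacency gives covering (right-pointing case) -/
lemma csp_adj : ∀ v, v ≠ r → p v < v → p v ⋖ v := by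
  intro v hvr hp
  exact ⟨hp, fun c h1 h2 => csp_gap r p d A hA hdr hd hdeg hsorted v c hvr hp h1 h2⟩

/-- covering gives adjacency (right side) -/
lemma csp_cov : ∀ u v, r ≤ u → u ⋖ v → A u v := by
  intro u v hru hcov
  have huv : u < v := hcov.1
  have hrv : r < v := lt_of_le_of_lt hru huv
  have hvr : v ≠ r := ne_of_gt hrv
  obtain ⟨hpl, hpr⟩ := csp_rstep r p d A hA hdr hd hdeg hsorted v hrv
  have hpu : p v = u := by
    rcases lt_trichotomy (p v) u with h | h | h
    · exact absurd (csp_gap r p d A hA hdr hd hdeg hsorted v u hvr hpl h huv) id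
    · exact h
    · exact absurd (hcov.2 h hpl) id
  exact (hA u v).mpr (Or.inl ⟨hvr, hpu, by rw [← hpu]; exact hd v hvr⟩)

end Aux


/-- **Certified sorted path.** Suppose every vertex except a unique root `r` has a
declared parent `p v` with declared distance `d v = d (p v) + 1` and `d r = 0`, the
graph `A` consists exactly of the parent-child edges (with distances differing by 1),
every vertex has at most two `A`-neighbors, and every vertex with two distinct
neighbors lies strictly between them in identifier order.  Then `A` is exactly the
sorted path: `u` and `v` are adjacent iff one covers the other in the linear order. -/
theorem certified_sorted_path {V : Type*} [Fintype V] [LinearOrder V]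
    (r : V) (p : V → V) (d : V → ℕ) (A : V → V → Prop)
    (hA : ∀ u v, A u v ↔
      ((v ≠ r ∧ p v = u ∧ d v = d u + 1) ∨ (u ≠ r ∧ p u = v ∧ d u = d v + 1)))
    (hdr : d r = 0)
    (hd : ∀ v, v ≠ r → d v = d (p v) + 1)
    (hdeg : ∀ u, Set.ncard {v | A u v} ≤ 2)
    (hsorted : ∀ u v w, A u v → A u w → v ≠ w →
      ((v < u ∧ u < w) ∨ (w < u ∧ u < v))) :
    ∀ u v, A u v ↔ (u ⋖ v ∨ v ⋖ u) := by
  have hs' := csp_hs' r p d A hA hdr hd hdeg hsorted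
  intro u v
  constructor
  · intro h
    rcases (hA u v).mp h with ⟨hvr, hpv, _⟩ | ⟨hur, hpu, _⟩
    · subst hpv
      have hdv : d v = d (p v) + 1 := hd v hvr
      have hne : p v ≠ v := by intro e; rw [e] at hdv; omega
      rcases lt_or_gt_of_ne hne with hlt | hgt
      · exact Or.inl (csp_adj r p d A hA hdr hd hdeg hsorted v hvr hlt)
      · have D := csp_adj (V := Vᵒᵈ) r p d A hA hdr hd hdeg hs' v hvr hgt
        exact Or.inr ⟨D.1, fun c h1 h2 => D.2 h2 h1⟩
    · subst hpu
      have hdu : d u = d (p u) + 1 := hd u hur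
      have hne : p u ≠ u := by intro e; rw [e] at hdu; omega
      rcases lt_or_gt_of_ne hne with hlt | hgt
      · exact Or.inr (csp_adj r p d A hA hdr hd hdeg hsorted u hur hlt)
      · have D := csp_adj (V := Vᵒᵈ) r p d A hA hdr hd hdeg hs' u hur hgt
        exact Or.inl ⟨D.1, fun c h1 h2 => D.2 h2 h1⟩
  · have hsymm : ∀ a b : V, A a b → A b a := by
      intro a b hab
      rcases (hA a b).mp hab with ⟨x, y, z⟩ | ⟨x, y, z⟩
      · exact (hA b a).mpr (Or.inr ⟨x, y, z⟩)
      · exact (hA b a).mpr (Or.inl ⟨x, y, z⟩)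
    intro h
    rcases h with h | h
    · rcases le_or_gt r u with hru | hur
      · exact csp_cov r p d A hA hdr hd hdeg hsorted u v hru h
      · rcases le_or_gt v r with hvr | hrv
        · have D : CovBy (α := Vᵒᵈ) v u := ⟨h.1, fun c h1 h2 => h.2 h2 h1⟩
          exact hsymm v u (csp_cov (V := Vᵒᵈ) r p d A hA hdr hd hdeg hs' v u hvr D)
        · exact (h.2 hur hrv).elim
    · rcases le_or_gt r v with hrv | hvr
      · exact hsymm v u (csp_cov r p d A hA hdr hd hdeg hsorted v u hrv h)
      · rcases le_or_gt u r with hur | hru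
        · have D : CovBy (α := Vᵒᵈ) u v := ⟨h.1, fun c h1 h2 => h.2 h2 h1⟩
          exact csp_cov (V := Vᵒᵈ) r p d A hA hdr hd hdeg hs' u v hur D
        · exact (h.2 hvr hru).elim
end

section
/- For every n there exists a weakly connected initial communication graph on n vertices (e.g., a directed path) and a pair of vertices u, v that are adjacent in the target sorted-path topology but at distance Ω(n) in the initial graph, such that any Sybil-resistant distributed overlay algorithm — i.e., one in which new edges may only be created between identifiers already present in a node's memory or channel — requires Ω(log n) synchronous rounds before u and v can be connected, regardless of any advice from a supervisor. Hence the convergence time to the target topology is Ω(log n). -/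
open SimpleGraph

private lemma pg_walk_le {N : ℕ} {a b : Fin N} (p : (pathGraph N).Walk a b) :
    b.val ≤ a.val + p.length := by
  induction p with
  | nil => simp
  | @cons x y z h q ih =>
      rcases pathGraph_adj.mp h with h' | h' <;> simp [Walk.length_cons] <;> omega

private lemma pg_exists_walk {N : ℕ} (k : ℕ) (a b : Fin N) (hab : a.val + k = b.val) :
    ∃ p : (pathGraph N).Walk a b, p.length = k := by
  induction k generalizing b with
  | zero =>
      have : a = b := Fin.ext (by omega)
      subst this; exact ⟨Walk.nil, rfl⟩
  | succ k ih =>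
      have hc : a.val + k < N := by omega
      set c : Fin N := ⟨a.val + k, hc⟩ with hcdef
      obtain ⟨p, hp⟩ := ih c rfl
      have hadj : (pathGraph N).Adj c b := pathGraph_adj.mpr (Or.inl (by simp [hcdef]; omega))
      exact ⟨p.concat hadj, by simp [hp]⟩

private lemma pg_dist {m : ℕ} :
    (pathGraph (m + 2)).dist 0 (Fin.last (m + 1)) = m + 1 := by
  apply le_antisymm
  · obtain ⟨p, hp⟩ := pg_exists_walk (N := m + 2) (m + 1) 0 (Fin.last (m + 1)) (by simp)
    have := dist_le p
    omega
  · obtain ⟨p, hp⟩ := (pathGraph_connected (m + 1)).exists_walk_length_eq_dist 0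
      (Fin.last (m + 1))
    have h2 := pg_walk_le p
    simp at h2
    calc m + 1 ≤ p.length := h2
      _ = _ := hp

private lemma iso_dist_eq {V W : Type*} {G : SimpleGraph V} {H : SimpleGraph W}
    (e : G ≃g H) (hG : G.Connected) (u v : V) : G.dist u v = H.dist (e u) (e v) := by
  apply le_antisymm
  · obtain ⟨p, hp⟩ := ((e.connected_iff).mp hG).exists_walk_length_eq_dist (e u) (e v)
    have := dist_le ((p.map e.symm.toHom).copy (e.toEquiv.symm_apply_apply u)
      (e.toEquiv.symm_apply_apply v))
    replace this := this.trans_eq ((Walk.length_copy _ _ _).trans (Walk.length_map _ _))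
    simpa [hp] using this
  · obtain ⟨p, hp⟩ := hG.exists_walk_length_eq_dist u v
    have := dist_le (p.map e.toHom)
    simpa [hp] using this

private lemma knowledge_dist {n : ℕ} {G : SimpleGraph (Fin n)} (hG : G.Connected)
    {K : ℕ → Fin n → Set (Fin n)}
    (h0 : ∀ w, K 0 w ⊆ insert w (G.neighborSet w))
    (hstep : ∀ t w, K (t + 1) w ⊆ ⋃ x ∈ K t w, K t x) :
    ∀ t w x, x ∈ K t w → G.dist w x ≤ 2 ^ t := by
  intro t
  induction t with
  | zero =>
      intro w x hx
      rcases h0 w hx with h | h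
      · simp [h, SimpleGraph.dist_self]
      · have : G.Adj w x := h
        simpa using dist_le this.toWalk
  | succ t ih =>
      intro w x hx
      obtain ⟨y, hy, hxy⟩ := Set.mem_iUnion₂.mp (hstep t w hx)
      calc G.dist w x ≤ G.dist w y + G.dist y x := hG.dist_triangle
        _ ≤ 2 ^ t + 2 ^ t := Nat.add_le_add (ih w y hy) (ih y x hxy)
        _ = 2 ^ (t + 1) := by ring

/-- **Lower bound for Sybil-resistant stabilization.**  For every `n ≥ 2` there is a
weakly connected initial communication graph on `n` nodes and two nodes `u, v` that
are adjacent in the target sorted-path topology (`u ⋖ v` in identifier order) but at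
distance `n - 1 = Ω(n)` initially, such that for any Sybil-resistant dynamics — where
identifiers spread only along existing connections, i.e. initial knowledge is the
closed neighborhood and each round's knowledge is contained in the union of the
knowledge of known nodes, regardless of any supervisor advice — node `u` cannot hold
`v`'s identifier before round `⌈log₂ (n-1)⌉ = Ω(log n)`.  Hence convergence to the
target topology takes `Ω(log n)` rounds. -/
theorem sybil_resistant_lower_bound (n : ℕ) (hn : 2 ≤ n) :
    ∃ G : SimpleGraph (Fin n), G.Connected ∧
      ∃ u v : Fin n, u ⋖ v ∧ G.dist u v = n - 1 ∧
        ∀ K : ℕ → Fin n → Set (Fin n),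
          (∀ w, K 0 w ⊆ insert w (G.neighborSet w)) →
          (∀ t w, K (t + 1) w ⊆ ⋃ x ∈ K t w, K t x) →
          ∀ t, v ∈ K t u → Nat.clog 2 (n - 1) ≤ t := by
  obtain ⟨m, rfl⟩ : ∃ m, n = m + 2 := ⟨n - 2, by omega⟩
  set e : Fin (m + 2) ≃ Fin (m + 2) := Equiv.swap 1 (Fin.last (m + 1)) with he
  set G : SimpleGraph (Fin (m + 2)) := (pathGraph (m + 2)).comap e.toEmbedding with hGdef
  obtain ⟨iso, hisodef⟩ : ∃ i : G ≃g pathGraph (m + 2), i = Iso.comap e (pathGraph (m + 2)) :=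
    ⟨_, rfl⟩
  have hiso : ∀ w, iso w = e w := fun w => by
    rw [hisodef]; exact Iso.comap_apply e (pathGraph (m + 2)) w
  have hGconn : G.Connected := (iso.connected_iff).mpr (pathGraph_connected (m + 1))
  refine ⟨G, hGconn, 0, 1, ?_, ?_, ?_⟩
  · -- 0 ⋖ 1 in Fin (m+2)
    rw [← Fin.coe_covBy_iff, Order.covBy_iff_add_one_eq]
    simp
  · have h01 : e (0 : Fin (m + 2)) = 0 := by
      rw [he]
      apply Equiv.swap_apply_of_ne_of_ne
      · exact fun h => by simpa using congrArg Fin.val h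
      · exact fun h => by have := congrArg Fin.val h; simp [Fin.last] at this
    have h1 : e (1 : Fin (m + 2)) = Fin.last (m + 1) := by rw [he]; exact Equiv.swap_apply_left _ _
    rw [iso_dist_eq iso hGconn, hiso, hiso, h01, h1, pg_dist]
    omega
  · intro K h0 hstep t hv
    have hdist : G.dist 0 1 ≤ 2 ^ t := knowledge_dist hGconn h0 hstep t 0 1 hv
    have hd : G.dist (0 : Fin (m + 2)) 1 = m + 1 := by
      have h01 : e (0 : Fin (m + 2)) = 0 := by
        rw [he]
        apply Equiv.swap_apply_of_ne_of_ne
        · exact fun h => by simpa using congrArg Fin.val h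
        · exact fun h => by have := congrArg Fin.val h; simp [Fin.last] at this
      have h1 : e (1 : Fin (m + 2)) = Fin.last (m + 1) := by
        rw [he]; exact Equiv.swap_apply_left _ _
      rw [iso_dist_eq iso hGconn, hiso, hiso, h01, h1, pg_dist]
    have : m + 2 - 1 ≤ 2 ^ t := by omega
    exact (Nat.clog_le_iff_le_pow (by norm_num)).mpr this
end

section
/- Let V be a finite set of vertices with distinct identifiers, and suppose each vertex v is assigned a set c-ids(v) of identifiers satisfying: |c-ids(v)| ≤ 2; if |c-ids(v)| = 2 then min(c-ids(v)) < id(v) < max(c-ids(v)); the relation is symmetric (u ∈ c-ids(v) iff v ∈ c-ids(u)); and the resulting graph is a spanning tree of V. Then the graph is exactly the sorted path on V: every vertex's c-ids are precisely its predecessor and/or successor in identifier order. -/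
/-- **Locally sorted spanning tree is the sorted path.**  Suppose each vertex `v` of a
finite linearly ordered vertex set stores a set `cids v` of at most two neighbor ids,
not containing `v` itself, the relation is symmetric, every vertex with two distinct
stored ids lies strictly between them, and the resulting graph is a spanning tree.
Then the graph is exactly the sorted path: `u ∈ cids v` iff `u` and `v` are
consecutive in identifier order. -/
theorem locally_sorted_tree_is_sorted_path {V : Type*} [Fintype V] [LinearOrder V]
    (cids : V → Finset V)
    (hdeg : ∀ v, (cids v).card ≤ 2)
    (hirr : ∀ v, v ∉ cids v)
    (hsymm : ∀ u v, u ∈ cids v ↔ v ∈ cids u)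
    (hsorted : ∀ v, (cids v).card = 2 → ∀ a ∈ cids v, ∀ b ∈ cids v, a ≠ b →
      ((a < v ∧ v < b) ∨ (b < v ∧ v < a)))
    (htree : (SimpleGraph.fromRel (fun u v => u ∈ cids v)).IsTree) :
    ∀ u v, u ∈ cids v ↔ (u ⋖ v ∨ v ⋖ u) := by
  set G := SimpleGraph.fromRel (fun u v => u ∈ cids v) with hG
  have hadj : ∀ a b : V, G.Adj a b ↔ a ∈ cids b := by
    intro a b
    rw [hG, SimpleGraph.fromRel_adj]
    constructor
    · rintro ⟨hne, h | h⟩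
      · exact h
      · exact (hsymm a b).mpr h
    · intro h
      exact ⟨fun e => hirr b (e ▸ h), Or.inl h⟩
  -- two elements in `cids v` force card = 2
  have hcard2 : ∀ (v x u : V), x ∈ cids v → u ∈ cids v → x ≠ u → (cids v).card = 2 := by
    intro v x u hx hu hxu
    have hsub : ({x, u} : Finset V) ⊆ cids v :=
      Finset.insert_subset_iff.mpr ⟨hx, Finset.singleton_subset_iff.mpr hu⟩
    have h2 : (2 : ℕ) ≤ (cids v).card := by
      have := Finset.card_le_card hsub
      rwa [Finset.card_pair hxu] at this
    exact le_antisymm (hdeg v) h2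
  -- any path in G is monotone
  have key : ∀ {x y : V} (p : G.Walk x y), p.IsPath →
      List.Chain' (· < ·) p.support ∨ List.Chain' (· > ·) p.support := by
    intro x y p
    induction p with
    | nil => intro _; left; simp [List.Chain']
    | @cons x v w h q ih =>
      intro hp
      rw [SimpleGraph.Walk.cons_isPath_iff] at hp
      obtain ⟨hq, hxq⟩ := hp
      have hxv : x ∈ cids v := (hadj x v).mp h
      cases q with
      | nil =>
        rcases h.ne.lt_or_gt with hlt | hlt
        · left; simp [List.Chain', hlt]
        · right; simp [List.Chain', hlt]
      | @cons v u w h' r =>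
        have huv : u ∈ cids v := (hsymm u v).mpr ((hadj v u).mp h')
        have hxu : x ≠ u := by
          intro e
          apply hxq
          rw [SimpleGraph.Walk.support_cons]
          exact List.mem_cons_of_mem _ (e ▸ r.start_mem_support)
        have hc2 := hcard2 v x u hxv huv hxu
        have hs := hsorted v hc2 x hxv u huv hxu
        have hchain := ih hq
        simp only [SimpleGraph.Walk.support_cons] at hchain ⊢
        rw [r.support_eq_cons] at hchain ⊢
        rcases h.ne.lt_or_gt with hlt | hlt
        · -- x < v, so v < u, so the tail chain must be increasing
          have hvu : v < u := by
            rcases hs with ⟨_, h2⟩ | ⟨_, h2⟩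
            · exact h2
            · exact absurd hlt (not_lt.mpr h2.le)
          left
          rcases hchain with hc | hc
          · exact List.isChain_cons_cons.mpr ⟨hlt, List.isChain_cons_cons.mpr (List.isChain_cons_cons.mp hc)⟩
          · exact absurd (List.isChain_cons_cons.mp hc).1 (not_lt.mpr hvu.le)
        · -- v < x, so u < v, decreasing
          have hvu : u < v := by
            rcases hs with ⟨h2, _⟩ | ⟨h2, _⟩
            · exact absurd hlt (not_lt.mpr h2.le)
            · exact h2
          right
          rcases hchain with hc | hc
          · exact absurd (List.isChain_cons_cons.mp hc).1 (not_lt.mpr hvu.le)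
          · exact List.isChain_cons_cons.mpr ⟨hlt, List.isChain_cons_cons.mpr (List.isChain_cons_cons.mp hc)⟩
  -- a path from a smaller to a larger vertex is increasing
  have pathInc : ∀ {x y : V} (p : G.Walk x y), p.IsPath → x < y →
      List.Chain' (· < ·) p.support := by
    intro x y p hp hxy
    rcases key p hp with hc | hc
    · exact hc
    · exfalso
      have hpw : List.Pairwise (· > ·) p.support := List.isChain_iff_pairwise.mp hc
      rw [p.support_eq_cons] at hpw
      have hy : y ∈ p.support.tail := by
        have := p.end_mem_support
        rw [p.support_eq_cons] at this
        rcases List.mem_cons.mp this with e | e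
        · exact absurd e (ne_of_gt hxy)
        · exact e
      exact absurd ((List.pairwise_cons.mp hpw).1 y hy) (not_lt.mpr hxy.le)
  -- main claim, forward: adjacency implies covering
  have fwd : ∀ a b : V, a ∈ cids b → a < b → a ⋖ b := by
    intro a b hab hlt
    refine ⟨hlt, ?_⟩
    intro c hac hcb
    obtain ⟨w⟩ := htree.isConnected a c
    obtain ⟨p, hp⟩ := w.toPath
    have hinc := pathInc p hp hac
    cases p with
    | nil => exact absurd rfl (ne_of_lt hac)
    | @cons a w' c h q =>
      rw [SimpleGraph.Walk.cons_isPath_iff] at hp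
      have hw'a : w' ∈ cids a := (hsymm w' a).mpr ((hadj a w').mp h)
      have hba : b ∈ cids a := (hsymm b a).mpr hab
      rw [SimpleGraph.Walk.support_cons, q.support_eq_cons] at hinc
      have haw' : a < w' := (List.isChain_cons_cons.mp hinc).1
      by_cases hwb : w' = b
      · -- path passes through b, but then b < c, contradiction
        have hpw : List.Pairwise (· < ·) (w' :: q.support.tail) :=
          List.isChain_iff_pairwise.mp (List.isChain_cons_cons.mp hinc).2
        have hc : c ∈ q.support.tail := by
          have := q.end_mem_support
          rw [q.support_eq_cons] at this
          rcases List.mem_cons.mp this with e | e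
          · exact absurd (e.trans hwb) (ne_of_lt hcb)
          · exact e
        have : w' < c := (List.pairwise_cons.mp hpw).1 c hc
        exact absurd (hwb ▸ this) (not_lt.mpr hcb.le)
      · -- two neighbors of a both above a, contradiction with hsorted
        have hc2 := hcard2 a w' b hw'a hba hwb
        rcases hsorted a hc2 w' hw'a b hba hwb with ⟨h1, _⟩ | ⟨h2, _⟩
        · exact absurd haw' (not_lt.mpr h1.le)
        · exact absurd hlt (not_lt.mpr h2.le)
  -- backward: covering implies adjacency
  have bwd : ∀ a b : V, a ⋖ b → a ∈ cids b := by
    intro a b hcov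
    have hlt := hcov.1
    obtain ⟨w⟩ := htree.isConnected a b
    obtain ⟨p, hp⟩ := w.toPath
    have hinc := pathInc p hp hlt
    cases p with
    | nil => exact absurd rfl (ne_of_lt hlt)
    | @cons a w' b h q =>
      rw [SimpleGraph.Walk.cons_isPath_iff] at hp
      rw [SimpleGraph.Walk.support_cons, q.support_eq_cons] at hinc
      have haw' : a < w' := (List.isChain_cons_cons.mp hinc).1
      by_cases hwb : w' = b
      · exact (hadj a b).mp (hwb ▸ h)
      · exfalso
        have hpw : List.Pairwise (· < ·) (w' :: q.support.tail) :=
          List.isChain_iff_pairwise.mp (List.isChain_cons_cons.mp hinc).2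
        have hbmem : b ∈ q.support.tail := by
          have := q.end_mem_support
          rw [q.support_eq_cons] at this
          rcases List.mem_cons.mp this with e | e
          · exact absurd e.symm hwb
          · exact e
        have hw'b : w' < b := (List.pairwise_cons.mp hpw).1 b hbmem
        exact hcov.2 haw' hw'b
  intro u v
  constructor
  · intro h
    rcases lt_or_gt_of_ne (show u ≠ v from fun e => hirr v (by rwa [e] at h)) with hlt | hlt
    · exact Or.inl (fwd u v h hlt)
    · exact Or.inr (fwd v u ((hsymm v u).mpr h) hlt)
  · rintro (h | h)
    · exact bwd u v h
    · exact (hsymm u v).mpr (bwd v u h)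
end
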